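/- Leakage bound for polarized frozen sets: suppose [1:n] is partitioned according to the values h_i := H(U_i | Y^n, U^{i−1}) into L = {i : h_i ≤ δ}, M = {i : δ < h_i ≤ 1−δ}, and Hset = {i : h_i > 1−δ}, and let F = M ∪ Hset. Then I(U_F; Y^n) ≤ |M| + n·δ. -/

import Mathlib

open scoped Classical

/-- Probability of an event under a pmf `μ` on a finite sample space. -/
noncomputable def Pr {Ω : Type*} [Fintype Ω] (μ : Ω → ℝ) (E : Ω → Prop) : ℝ :=
  ∑ ω, if E ω then μ ω else 0

/-- Conditional Shannon entropy `H(A | B)` in bits. -/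
noncomputable def condEnt {Ω α β : Type*} [Fintype Ω] [Fintype α] [Fintype β]
    (μ : Ω → ℝ) (A : Ω → α) (B : Ω → β) : ℝ :=
  ∑ a : α, ∑ b : β,
    Pr μ (fun ω => A ω = a ∧ B ω = b) *
      Real.logb 2 (Pr μ (fun ω => B ω = b) / Pr μ (fun ω => A ω = a ∧ B ω = b))

/-- Mutual information `I(A;B) = H(A) − H(A|B)` in bits. -/
noncomputable def mutInfo {Ω α β : Type*} [Fintype Ω] [Fintype α] [Fintype β]
    (μ : Ω → ℝ) (A : Ω → α) (B : Ω → β) : ℝ :=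
  condEnt μ A (fun _ => (() : Unit)) - condEnt μ A B

/-- `h_i = H(U_i | Yⁿ, U^{i−1})` in bits. -/
noncomputable def hEnt {Ω 𝒴 : Type*} [Fintype Ω] [Fintype 𝒴] {n : ℕ}
    (μ : Ω → ℝ) (U : Ω → Fin n → ZMod 2) (Y : Ω → 𝒴) (i : Fin n) : ℝ :=
  condEnt μ (fun ω => U ω i)
    (fun ω => (Y ω, fun j : {j : Fin n // j < i} => U ω j.1))

section PrLemmas
variable {Ω α β : Type*} [Fintype Ω] [Fintype α] [Fintype β] {μ : Ω → ℝ}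

lemma Pr_nonneg (hμ0 : ∀ ω, 0 ≤ μ ω) (E : Ω → Prop) : 0 ≤ Pr μ E :=
  Finset.sum_nonneg fun ω _ => by split <;> [exact hμ0 ω; exact le_rfl]

lemma Pr_congr {E E' : Ω → Prop} (h : ∀ ω, E ω ↔ E' ω) : Pr μ E = Pr μ E' :=
  Finset.sum_congr rfl fun ω _ => if_congr (h ω) rfl rfl

lemma Pr_mono (hμ0 : ∀ ω, 0 ≤ μ ω) {E E' : Ω → Prop} (h : ∀ ω, E ω → E' ω) :
    Pr μ E ≤ Pr μ E' := by
  refine Finset.sum_le_sum fun ω _ => ?_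
  by_cases hE : E ω
  · rw [if_pos hE, if_pos (h ω hE)]
  · rw [if_neg hE]; split <;> [exact hμ0 ω; exact le_rfl]

lemma Pr_false {E : Ω → Prop} (h : ∀ ω, ¬ E ω) : Pr μ E = 0 :=
  Finset.sum_eq_zero fun ω _ => if_neg (h ω)

lemma Pr_sum_fiber (A : Ω → α) (Q : Ω → Prop) :
    ∑ a, Pr μ (fun ω => A ω = a ∧ Q ω) = Pr μ Q := by
  unfold Pr
  rw [Finset.sum_comm]
  refine Finset.sum_congr rfl fun ω _ => ?_
  by_cases hQ : Q ω
  · simp [hQ]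
  · simp [hQ]

lemma Pr_true (hμ1 : ∑ ω, μ ω = 1) : Pr μ (fun _ => True) = 1 := by
  simp [Pr, hμ1]

lemma sum_Pr_eq_one (hμ1 : ∑ ω, μ ω = 1) (B : Ω → β) :
    ∑ b, Pr μ (fun ω => B ω = b) = 1 := by
  have h := Pr_sum_fiber (μ := μ) B (fun _ => True)
  simp only [and_true] at h
  rw [h, Pr_true hμ1]

end PrLemmas

lemma sum_mul_logb_le {ι : Type*} [Fintype ι] (w x : ι → ℝ)
    (hw : ∀ i, 0 ≤ w i) (hx : ∀ i, w i ≠ 0 → 0 < x i)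
    (hsum : ∑ i, w i = 1) (hwx : ∑ i, w i * x i ≤ 1) :
    ∑ i, w i * Real.logb 2 (x i) ≤ 0 := by
  have h2 : (0:ℝ) < Real.log 2 := Real.log_pos (by norm_num)
  have step : ∀ i, w i * Real.logb 2 (x i) ≤ w i * ((x i - 1) / Real.log 2) := by
    intro i
    by_cases h : w i = 0
    · simp [h]
    · refine mul_le_mul_of_nonneg_left ?_ (hw i)
      rw [Real.logb, div_le_div_iff_of_pos_right h2]
      exact Real.log_le_sub_one_of_pos (hx i h)
  calc ∑ i, w i * Real.logb 2 (x i) ≤ ∑ i, w i * ((x i - 1) / Real.log 2) :=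
        Finset.sum_le_sum fun i _ => step i
    _ = (∑ i, (w i * x i - w i)) / Real.log 2 := by
        rw [Finset.sum_div]
        exact Finset.sum_congr rfl fun i _ => by ring
    _ = ((∑ i, w i * x i) - 1) / Real.log 2 := by
        rw [Finset.sum_sub_distrib, hsum]
    _ ≤ 0 := div_nonpos_of_nonpos_of_nonneg (by linarith) h2.le

section CondEnt
variable {Ω α β γ : Type*} [Fintype Ω] [Fintype α] [Fintype β] [Fintype γ]
variable {μ : Ω → ℝ}

lemma condEnt_nonneg (hμ0 : ∀ ω, 0 ≤ μ ω) (A : Ω → α) (B : Ω → β) :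
    0 ≤ condEnt μ A B := by
  refine Finset.sum_nonneg fun a _ => Finset.sum_nonneg fun b _ => ?_
  by_cases h : Pr μ (fun ω => A ω = a ∧ B ω = b) = 0
  · simp [h]
  · have hp : 0 < Pr μ (fun ω => A ω = a ∧ B ω = b) :=
      lt_of_le_of_ne (Pr_nonneg hμ0 _) (Ne.symm h)
    have hq : Pr μ (fun ω => A ω = a ∧ B ω = b) ≤ Pr μ (fun ω => B ω = b) :=
      Pr_mono hμ0 fun ω hω => hω.2
    exact mul_nonneg hp.le (Real.logb_nonneg one_lt_two ((one_le_div hp).2 hq))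

lemma condEnt_le_logb_card (hμ0 : ∀ ω, 0 ≤ μ ω) (hμ1 : ∑ ω, μ ω = 1)
    [Nonempty α] (A : Ω → α) (B : Ω → β) :
    condEnt μ A B ≤ Real.logb 2 (Fintype.card α) := by
  set p : α → β → ℝ := fun a b => Pr μ (fun ω => A ω = a ∧ B ω = b) with hp
  set q : β → ℝ := fun b => Pr μ (fun ω => B ω = b) with hq
  set K : ℝ := (Fintype.card α : ℝ) with hK
  have hK0 : 0 < K := by
    have := Fintype.card_pos (α := α); positivity
  have hp0 : ∀ a b, 0 ≤ p a b := fun a b => Pr_nonneg hμ0 _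
  have hq0 : ∀ b, 0 ≤ q b := fun b => Pr_nonneg hμ0 _
  have hpq : ∀ a b, p a b ≤ q b := fun a b => Pr_mono hμ0 fun ω hω => hω.2
  have hqsum : ∑ b, q b = 1 := sum_Pr_eq_one hμ1 B
  have hpsum : ∑ a, ∑ b, p a b = 1 := by
    rw [Finset.sum_comm]
    calc ∑ b, ∑ a, p a b = ∑ b, q b :=
          Finset.sum_congr rfl fun b _ => Pr_sum_fiber A (fun ω => B ω = b)
      _ = 1 := hqsum
  -- expand: condEnt = (∑∑ p * logb (q/(p*K))) + logb K
  have expand : condEnt μ A B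
      = (∑ a, ∑ b, p a b * Real.logb 2 (q b / (p a b * K))) + Real.logb 2 K := by
    have : ∀ a b, p a b * Real.logb 2 (q b / p a b)
        = p a b * Real.logb 2 (q b / (p a b * K)) + p a b * Real.logb 2 K := by
      intro a b
      by_cases h : p a b = 0
      · simp [h]
      · have hppos : 0 < p a b := lt_of_le_of_ne (hp0 a b) (Ne.symm h)
        have harg : q b / p a b = (q b / (p a b * K)) * K := by
          field_simp
        by_cases hqz : q b = 0
        · have hpz : p a b = 0 := le_antisymm (hqz ▸ hpq a b) (hp0 a b)
          simp [hpz]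
        · have hqpos : 0 < q b := lt_of_le_of_ne (hq0 b) (Ne.symm hqz)
          rw [harg, Real.logb_mul (ne_of_gt (div_pos hqpos (mul_pos hppos hK0)))
            (ne_of_gt hK0), mul_add]
    calc condEnt μ A B = ∑ a, ∑ b, p a b * Real.logb 2 (q b / p a b) := rfl
      _ = ∑ a, ∑ b, (p a b * Real.logb 2 (q b / (p a b * K)) + p a b * Real.logb 2 K) := by
          exact Finset.sum_congr rfl fun a _ => Finset.sum_congr rfl fun b _ => this a b
      _ = (∑ a, ∑ b, p a b * Real.logb 2 (q b / (p a b * K)))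
            + (∑ a, ∑ b, p a b) * Real.logb 2 K := by
          rw [Finset.sum_mul]
          rw [← Finset.sum_add_distrib]
          refine Finset.sum_congr rfl fun a _ => ?_
          rw [Finset.sum_mul, ← Finset.sum_add_distrib]
      _ = (∑ a, ∑ b, p a b * Real.logb 2 (q b / (p a b * K))) + Real.logb 2 K := by
          rw [hpsum, one_mul]
  rw [expand]
  have key : (∑ a, ∑ b, p a b * Real.logb 2 (q b / (p a b * K))) ≤ 0 := by
    have := sum_mul_logb_le (ι := α × β)
      (w := fun ab => p ab.1 ab.2) (x := fun ab => q ab.2 / (p ab.1 ab.2 * K))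
      (fun ab => hp0 ab.1 ab.2)
      (fun ab h => by
        have hppos : 0 < p ab.1 ab.2 := lt_of_le_of_ne (hp0 ab.1 ab.2) (Ne.symm h)
        have hqpos : 0 < q ab.2 := lt_of_lt_of_le hppos (hpq ab.1 ab.2)
        exact div_pos hqpos (mul_pos hppos hK0))
      (by rw [Fintype.sum_prod_type]; exact hpsum)
      (by
        rw [Fintype.sum_prod_type]
        calc ∑ a, ∑ b, p a b * (q b / (p a b * K)) ≤ ∑ a, ∑ b, q b / K := by
              refine Finset.sum_le_sum fun a _ => Finset.sum_le_sum fun b _ => ?_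
              by_cases h : p a b = 0
              · simp only [h, zero_mul]
                exact div_nonneg (hq0 b) hK0.le
              · have hppos : 0 < p a b := lt_of_le_of_ne (hp0 a b) (Ne.symm h)
                rw [show p a b * (q b / (p a b * K)) = q b / K by field_simp]
          _ = ∑ _a : α, (1:ℝ)/K :=
              Finset.sum_congr rfl fun a _ => by rw [← Finset.sum_div, hqsum]
          _ = 1 := by
              rw [Finset.sum_const, Finset.card_univ, nsmul_eq_mul]
              field_simp; rfl)
    rw [Fintype.sum_prod_type] at this
    exact this
  linarith


lemma condEnt_comp_right {β' : Type*} [Fintype β'] (A : Ω → α) (B : Ω → β)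
    (f : β → β') (hf : Function.Injective f) :
    condEnt μ A (fun ω => f (B ω)) = condEnt μ A B := by
  unfold condEnt
  refine Finset.sum_congr rfl fun a _ => ?_
  rw [← Finset.sum_subset (Finset.subset_univ (Finset.univ.image f))
    (fun b' _ hb' => ?_)]
  · rw [Finset.sum_image (fun b _ b2 _ h => hf h)]
    refine Finset.sum_congr rfl fun b _ => ?_
    have h1 : Pr μ (fun ω => A ω = a ∧ f (B ω) = f b)
        = Pr μ (fun ω => A ω = a ∧ B ω = b) :=
      Pr_congr fun ω => by rw [hf.eq_iff]
    have h2 : Pr μ (fun ω => f (B ω) = f b) = Pr μ (fun ω => B ω = b) :=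
      Pr_congr fun ω => hf.eq_iff
    rw [h1, h2]
  · have : Pr μ (fun ω => A ω = a ∧ f (B ω) = b') = 0 := by
      refine Pr_false fun ω hω => hb' ?_
      exact hω.2 ▸ Finset.mem_image_of_mem f (Finset.mem_univ (B ω))
    rw [this, zero_mul]

lemma condEnt_comp_left {α' : Type*} [Fintype α'] (A : Ω → α) (B : Ω → β)
    (f : α → α') (hf : Function.Injective f) :
    condEnt μ (fun ω => f (A ω)) B = condEnt μ A B := by
  unfold condEnt
  rw [← Finset.sum_subset (Finset.subset_univ (Finset.univ.image f))
    (fun a' _ ha' => ?_)]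
  · rw [Finset.sum_image (fun x _ y _ h => hf h)]
    refine Finset.sum_congr rfl fun x _ => Finset.sum_congr rfl fun b _ => ?_
    have h1 : Pr μ (fun ω => f (A ω) = f x ∧ B ω = b)
        = Pr μ (fun ω => A ω = x ∧ B ω = b) :=
      Pr_congr fun ω => by rw [hf.eq_iff]
    rw [h1]
  · refine Finset.sum_eq_zero fun b _ => ?_
    have : Pr μ (fun ω => f (A ω) = a' ∧ B ω = b) = 0 := by
      refine Pr_false fun ω hω => ha' ?_
      exact hω.1 ▸ Finset.mem_image_of_mem f (Finset.mem_univ (A ω))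
    rw [this, zero_mul]

lemma condEnt_pair_left (hμ0 : ∀ ω, 0 ≤ μ ω) (A : Ω → α) (B : Ω → β) (C : Ω → γ) :
    condEnt μ (fun ω => (A ω, B ω)) C
      = condEnt μ A C + condEnt μ B (fun ω => (A ω, C ω)) := by
  set p : α → β → γ → ℝ := fun a b c => Pr μ (fun ω => A ω = a ∧ B ω = b ∧ C ω = c) with hpdef
  set pac : α → γ → ℝ := fun a c => Pr μ (fun ω => A ω = a ∧ C ω = c) with hpacdef
  set r : γ → ℝ := fun c => Pr μ (fun ω => C ω = c) with hrdef
  have hpac : ∀ a c, pac a c = ∑ b, p a b c := by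
    intro a c
    show Pr μ (fun ω => A ω = a ∧ C ω = c) = ∑ b, p a b c
    rw [← Pr_sum_fiber B (fun ω => A ω = a ∧ C ω = c)]
    exact Finset.sum_congr rfl fun b _ => Pr_congr fun ω => by tauto
  have hL : condEnt μ (fun ω => (A ω, B ω)) C
      = ∑ a, ∑ b, ∑ c, p a b c * Real.logb 2 (r c / p a b c) := by
    unfold condEnt
    rw [Fintype.sum_prod_type]
    refine Finset.sum_congr rfl fun a _ => Finset.sum_congr rfl fun b _ =>
      Finset.sum_congr rfl fun c _ => ?_
    have h1 : Pr μ (fun ω => (A ω, B ω) = (a, b) ∧ C ω = c) = p a b c :=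
      Pr_congr fun ω => by simp [Prod.ext_iff, and_assoc]
    rw [h1]
  have hR2 : condEnt μ B (fun ω => (A ω, C ω))
      = ∑ a, ∑ b, ∑ c, p a b c * Real.logb 2 (pac a c / p a b c) := by
    rw [← Finset.sum_comm]
    unfold condEnt
    rw [show (∑ b, ∑ x : α × γ,
        Pr μ (fun ω => B ω = b ∧ (A ω, C ω) = x) *
          Real.logb 2 (Pr μ (fun ω => (A ω, C ω) = x) / Pr μ (fun ω => B ω = b ∧ (A ω, C ω) = x)))
        = ∑ b, ∑ a, ∑ c, p a b c * Real.logb 2 (pac a c / p a b c) from ?_]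
    refine Finset.sum_congr rfl fun b _ => ?_
    rw [Fintype.sum_prod_type]
    refine Finset.sum_congr rfl fun a _ => Finset.sum_congr rfl fun c _ => ?_
    have h1 : Pr μ (fun ω => B ω = b ∧ (A ω, C ω) = (a, c)) = p a b c :=
      Pr_congr fun ω => by simp [Prod.ext_iff]; tauto
    have h2 : Pr μ (fun ω => (A ω, C ω) = (a, c)) = pac a c :=
      Pr_congr fun ω => by simp [Prod.ext_iff]
    rw [h1, h2]
  have hR1 : condEnt μ A C
      = ∑ a, ∑ b, ∑ c, p a b c * Real.logb 2 (r c / pac a c) := by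
    unfold condEnt
    refine Finset.sum_congr rfl fun a _ => ?_
    rw [Finset.sum_comm]
    refine Finset.sum_congr rfl fun c _ => ?_
    rw [← Finset.sum_mul, ← hpac a c]
  rw [hL, hR1, hR2, ← Finset.sum_add_distrib]
  refine Finset.sum_congr rfl fun a _ => ?_
  rw [← Finset.sum_add_distrib]
  refine Finset.sum_congr rfl fun b _ => ?_
  rw [← Finset.sum_add_distrib]
  refine Finset.sum_congr rfl fun c _ => ?_
  by_cases h : p a b c = 0
  · simp [h]
  · have hp0 : 0 ≤ p a b c := Pr_nonneg hμ0 _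
    have hppos : 0 < p a b c := lt_of_le_of_ne hp0 (Ne.symm h)
    have hple : p a b c ≤ pac a c := Pr_mono hμ0 fun ω hω => ⟨hω.1, hω.2.2⟩
    have hpacpos : 0 < pac a c := lt_of_lt_of_le hppos hple
    have hrle : pac a c ≤ r c := Pr_mono hμ0 fun ω hω => hω.2
    have hrpos : 0 < r c := lt_of_lt_of_le hpacpos hrle
    have harg : r c / p a b c = (r c / pac a c) * (pac a c / p a b c) := by
      field_simp
    rw [harg, Real.logb_mul (ne_of_gt (div_pos hrpos hpacpos))
      (ne_of_gt (div_pos hpacpos hppos)), mul_add]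

lemma condEnt_cond_le (hμ0 : ∀ ω, 0 ≤ μ ω) (hμ1 : ∑ ω, μ ω = 1)
    (A : Ω → α) (B : Ω → β) (C : Ω → γ) :
    condEnt μ A (fun ω => (B ω, C ω)) ≤ condEnt μ A B := by
  set p : α → β → γ → ℝ := fun a b c => Pr μ (fun ω => A ω = a ∧ B ω = b ∧ C ω = c) with hpdef
  set pbc : β → γ → ℝ := fun b c => Pr μ (fun ω => B ω = b ∧ C ω = c) with hpbcdef
  set pab : α → β → ℝ := fun a b => Pr μ (fun ω => A ω = a ∧ B ω = b) with hpabdef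
  set pb : β → ℝ := fun b => Pr μ (fun ω => B ω = b) with hpbdef
  have hp0 : ∀ a b c, 0 ≤ p a b c := fun a b c => Pr_nonneg hμ0 _
  have hpbc : ∀ b c, pbc b c = ∑ a, p a b c := fun b c =>
    (Pr_sum_fiber A (fun ω => B ω = b ∧ C ω = c)).symm
  have hpab : ∀ a b, pab a b = ∑ c, p a b c := by
    intro a b
    show Pr μ (fun ω => A ω = a ∧ B ω = b) = ∑ c, p a b c
    rw [← Pr_sum_fiber C (fun ω => A ω = a ∧ B ω = b)]
    exact Finset.sum_congr rfl fun c _ => Pr_congr fun ω => by tauto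
  have hpb : ∀ b, pb b = ∑ a, pab a b := fun b =>
    (Pr_sum_fiber A (fun ω => B ω = b)).symm
  have hpb2 : ∀ b, pb b = ∑ c, pbc b c := by
    intro b
    show Pr μ (fun ω => B ω = b) = ∑ c, pbc b c
    rw [← Pr_sum_fiber C (fun ω => B ω = b)]
    exact Finset.sum_congr rfl fun c _ => Pr_congr fun ω => by tauto
  have hpb0 : ∀ b, 0 ≤ pb b := fun b => Pr_nonneg hμ0 _
  have hpab0 : ∀ a b, 0 ≤ pab a b := fun a b => Pr_nonneg hμ0 _
  have hpbc0 : ∀ b c, 0 ≤ pbc b c := fun b c => Pr_nonneg hμ0 _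
  have hL : condEnt μ A (fun ω => (B ω, C ω))
      = ∑ a, ∑ b, ∑ c, p a b c * Real.logb 2 (pbc b c / p a b c) := by
    unfold condEnt
    refine Finset.sum_congr rfl fun a _ => ?_
    rw [Fintype.sum_prod_type]
    refine Finset.sum_congr rfl fun b _ => Finset.sum_congr rfl fun c _ => ?_
    have h1 : Pr μ (fun ω => A ω = a ∧ (B ω, C ω) = (b, c)) = p a b c :=
      Pr_congr fun ω => by simp [Prod.ext_iff]
    have h2 : Pr μ (fun ω => (B ω, C ω) = (b, c)) = pbc b c :=
      Pr_congr fun ω => by simp [Prod.ext_iff]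
    rw [h1, h2]
  have hR : condEnt μ A B
      = ∑ a, ∑ b, ∑ c, p a b c * Real.logb 2 (pb b / pab a b) := by
    unfold condEnt
    refine Finset.sum_congr rfl fun a _ => Finset.sum_congr rfl fun b _ => ?_
    rw [← Finset.sum_mul, ← hpab a b]
  rw [hL, hR, ← sub_nonpos]
  have hterm : ∀ a b c,
      p a b c * Real.logb 2 (pbc b c / p a b c)
        - p a b c * Real.logb 2 (pb b / pab a b)
      = p a b c * Real.logb 2 (pab a b * pbc b c / (pb b * p a b c)) := by
    intro a b c
    by_cases h : p a b c = 0
    · simp [h]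
    · have hppos : 0 < p a b c := lt_of_le_of_ne (hp0 a b c) (Ne.symm h)
      have hple1 : p a b c ≤ pab a b := Pr_mono hμ0 fun ω hω => ⟨hω.1, hω.2.1⟩
      have hple2 : p a b c ≤ pbc b c := Pr_mono hμ0 fun ω hω => hω.2
      have hpabpos : 0 < pab a b := lt_of_lt_of_le hppos hple1
      have hpbcpos : 0 < pbc b c := lt_of_lt_of_le hppos hple2
      have hpbpos : 0 < pb b :=
        lt_of_lt_of_le hpabpos (Pr_mono hμ0 fun ω hω => hω.2)
      have harg : pab a b * pbc b c / (pb b * p a b c)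
          = (pbc b c / p a b c) / (pb b / pab a b) := by
        field_simp
      rw [harg, Real.logb_div (ne_of_gt (div_pos hpbcpos hppos))
        (ne_of_gt (div_pos hpbpos hpabpos)), mul_sub]
  have hsum3 : ∑ a, ∑ b, ∑ c, p a b c = 1 := by
    have h1 : ∀ a, ∑ b, ∑ c, p a b c = ∑ b, pab a b :=
      fun a => Finset.sum_congr rfl fun b _ => (hpab a b).symm
    calc ∑ a, ∑ b, ∑ c, p a b c = ∑ a, ∑ b, pab a b :=
          Finset.sum_congr rfl fun a _ => h1 a
      _ = ∑ b, ∑ a, pab a b := Finset.sum_comm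
      _ = ∑ b, pb b := Finset.sum_congr rfl fun b _ => (hpb b).symm
      _ = 1 := sum_Pr_eq_one hμ1 B
  have hdiff : (∑ a, ∑ b, ∑ c, p a b c * Real.logb 2 (pbc b c / p a b c))
      - (∑ a, ∑ b, ∑ c, p a b c * Real.logb 2 (pb b / pab a b))
      = ∑ a, ∑ b, ∑ c, p a b c * Real.logb 2 (pab a b * pbc b c / (pb b * p a b c)) := by
    rw [← Finset.sum_sub_distrib]
    refine Finset.sum_congr rfl fun a _ => ?_
    rw [← Finset.sum_sub_distrib]
    refine Finset.sum_congr rfl fun b _ => ?_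
    rw [← Finset.sum_sub_distrib]
    exact Finset.sum_congr rfl fun c _ => hterm a b c
  rw [hdiff]
  have key := sum_mul_logb_le (ι := α × β × γ)
    (w := fun x => p x.1 x.2.1 x.2.2)
    (x := fun x => pab x.1 x.2.1 * pbc x.2.1 x.2.2 / (pb x.2.1 * p x.1 x.2.1 x.2.2))
    (fun x => hp0 _ _ _)
    (fun x h => by
      obtain ⟨a, b, c⟩ := x
      have hppos : 0 < p a b c := lt_of_le_of_ne (hp0 a b c) (Ne.symm h)
      have hple1 : p a b c ≤ pab a b := Pr_mono hμ0 fun ω hω => ⟨hω.1, hω.2.1⟩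
      have hple2 : p a b c ≤ pbc b c := Pr_mono hμ0 fun ω hω => hω.2
      have hpabpos : 0 < pab a b := lt_of_lt_of_le hppos hple1
      have hpbcpos : 0 < pbc b c := lt_of_lt_of_le hppos hple2
      have hpbpos : 0 < pb b :=
        lt_of_lt_of_le hpabpos (Pr_mono hμ0 fun ω hω => hω.2)
      exact div_pos (mul_pos hpabpos hpbcpos) (mul_pos hpbpos hppos))
    (by simp only [Fintype.sum_prod_type]; exact hsum3)
    ?_
  · simp only [Fintype.sum_prod_type] at key
    exact key
  · simp only [Fintype.sum_prod_type]
    have step1 : ∀ a b c, p a b c * (pab a b * pbc b c / (pb b * p a b c))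
        ≤ pab a b * pbc b c / pb b := by
      intro a b c
      by_cases h : p a b c = 0
      · rw [h, zero_mul]
        exact div_nonneg (mul_nonneg (hpab0 a b) (hpbc0 b c)) (hpb0 b)
      · rw [mul_comm (pb b) (p a b c), ← mul_div_assoc,
          mul_div_mul_left (pab a b * pbc b c) (pb b) h]
    calc ∑ a, ∑ b, ∑ c, p a b c * (pab a b * pbc b c / (pb b * p a b c))
        ≤ ∑ a, ∑ b, ∑ c, pab a b * pbc b c / pb b :=
          Finset.sum_le_sum fun a _ => Finset.sum_le_sum fun b _ =>
            Finset.sum_le_sum fun c _ => step1 a b c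
      _ = ∑ b, ∑ a, ∑ c, pab a b * pbc b c / pb b := Finset.sum_comm
      _ = ∑ b, pb b * pb b / pb b := by
          refine Finset.sum_congr rfl fun b _ => ?_
          rw [show (∑ a, ∑ c, pab a b * pbc b c / pb b)
              = (∑ a, pab a b) * (∑ c, pbc b c) / pb b from ?_]
          · rw [← hpb b, ← hpb2 b]
          · rw [Finset.sum_mul_sum]
            simp only [← Finset.sum_div]
      _ ≤ ∑ b, pb b := by
          refine Finset.sum_le_sum fun b _ => ?_
          by_cases h : pb b = 0
          · simp [h]
          · rw [mul_div_assoc, div_self h, mul_one]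
      _ = 1 := sum_Pr_eq_one hμ1 B

end CondEnt

section Main
variable {Ω α β γ 𝒴 : Type*} [Fintype Ω] [Fintype α] [Fintype β] [Fintype γ]
  [Fintype 𝒴] {μ : Ω → ℝ}

lemma mutInfo_comp_left {α' : Type*} [Fintype α'] (A : Ω → α) (Y : Ω → β)
    (f : α → α') (hf : Function.Injective f) :
    mutInfo μ (fun ω => f (A ω)) Y = mutInfo μ A Y := by
  unfold mutInfo
  rw [condEnt_comp_left A Y f hf, condEnt_comp_left A (fun _ => (() : Unit)) f hf]

lemma mutInfo_pair (hμ0 : ∀ ω, 0 ≤ μ ω) (A : Ω → α) (B : Ω → β) (Y : Ω → γ) :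
    mutInfo μ (fun ω => (A ω, B ω)) Y
      = mutInfo μ A Y + (condEnt μ B A - condEnt μ B (fun ω => (A ω, Y ω))) := by
  unfold mutInfo
  rw [condEnt_pair_left hμ0 A B (fun _ => (() : Unit)), condEnt_pair_left hμ0 A B Y]
  have e3 : condEnt μ B (fun ω => (A ω, (() : Unit))) = condEnt μ B A :=
    condEnt_comp_right B A (fun a => (a, ())) (fun x y h => congrArg Prod.fst h)
  rw [e3]
  ring

set_option maxHeartbeats 2000000 in
lemma main_bound {n : ℕ} (hμ0 : ∀ ω, 0 ≤ μ ω) (hμ1 : ∑ ω, μ ω = 1)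
    (U : Ω → Fin n → ZMod 2) (Y : Ω → 𝒴) (S : Finset (Fin n)) :
    mutInfo μ (fun ω => (fun j : {j // j ∈ S} => U ω j.1)) Y
      ≤ ∑ i ∈ S, (1 - hEnt μ U Y i) := by
  induction S using Finset.strongInduction with
  | _ S ih =>
  by_cases hS : S = ∅
  · subst hS
    unfold mutInfo
    have hcard : ((Fintype.card ({j // j ∈ (∅ : Finset (Fin n))} → ZMod 2)) : ℝ) = 1 := by
      simp
    have h1 := condEnt_le_logb_card hμ0 hμ1
      (A := fun ω => (fun j : {j // j ∈ (∅ : Finset (Fin n))} => U ω j.1))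
      (B := fun _ => (() : Unit))
    rw [hcard, Real.logb_one] at h1
    have h2 := condEnt_nonneg hμ0
      (fun ω => (fun j : {j // j ∈ (∅ : Finset (Fin n))} => U ω j.1)) Y
    simp only [Finset.sum_empty]
    linarith
  · have hSne : S.Nonempty := Finset.nonempty_iff_ne_empty.2 hS
    have hiS : S.max' hSne ∈ S := S.max'_mem hSne
    set i := S.max' hSne with hidef
    set S' := S.erase i with hS'def
    have hS'lt : ∀ j : {j // j ∈ S'}, (j.1 : Fin n) < i := fun j =>
      lt_of_le_of_ne (S.le_max' j.1 (Finset.mem_of_mem_erase j.2))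
        (Finset.ne_of_mem_erase j.2)
    have hrel : mutInfo μ (fun ω => (fun j : {j // j ∈ S} => U ω j.1)) Y
        = mutInfo μ (fun ω => ((fun j : {j // j ∈ S'} => U ω j.1), U ω i)) Y := by
      have he : Function.Injective (fun (v : {j // j ∈ S} → ZMod 2) =>
          ((fun j : {j // j ∈ S'} => v ⟨j.1, Finset.mem_of_mem_erase j.2⟩),
            v ⟨i, hiS⟩)) := by
        intro v w h
        funext j
        obtain ⟨j, hj⟩ := j
        by_cases hji : j = i
        · subst hji; exact congrArg Prod.snd h
        · have hj' : j ∈ S' := Finset.mem_erase.2 ⟨hji, hj⟩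
          exact congrFun (congrArg Prod.fst h) ⟨j, hj'⟩
      exact (mutInfo_comp_left _ Y _ he).symm
    have mstep := mutInfo_pair hμ0
      (fun ω => (fun j : {j // j ∈ S'} => U ω j.1)) (fun ω => U ω i) Y
    have hih := ih S' (Finset.erase_ssubset hiS)
    have hb1 : condEnt μ (fun ω => U ω i)
        (fun ω => (fun j : {j // j ∈ S'} => U ω j.1)) ≤ 1 := by
      have h := condEnt_le_logb_card hμ0 hμ1
        (A := fun ω => U ω i) (B := fun ω => (fun j : {j // j ∈ S'} => U ω j.1))
      have hc : ((Fintype.card (ZMod 2)) : ℝ) = 2 := by simp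
      rw [hc] at h
      simpa using h
    have hb2 : hEnt μ U Y i ≤ condEnt μ (fun ω => U ω i)
        (fun ω => ((fun j : {j // j ∈ S'} => U ω j.1), Y ω)) := by
      set B' : Ω → 𝒴 × ({j : Fin n // j < i} → ZMod 2) :=
        fun ω => (Y ω, fun j : {j : Fin n // j < i} => U ω j.1) with hB'def
      set Bc : Ω → (({j // j ∈ S'} → ZMod 2) × 𝒴) × (𝒴 × ({j : Fin n // j < i} → ZMod 2)) :=
        fun ω => (((fun j : {j // j ∈ S'} => U ω j.1), Y ω),
          (Y ω, fun j : {j : Fin n // j < i} => U ω j.1)) with hBcdef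
      have hg : Function.Injective (fun (x : 𝒴 × ({j : Fin n // j < i} → ZMod 2)) =>
          (((fun j : {j // j ∈ S'} => x.2 ⟨j.1, hS'lt j⟩), x.1), x)) :=
        fun x y h => congrArg Prod.snd h
      have heq : condEnt μ (fun ω => U ω i) Bc = hEnt μ U Y i := by
        have hfun : Bc = fun ω => (fun (x : 𝒴 × ({j : Fin n // j < i} → ZMod 2)) =>
            (((fun j : {j // j ∈ S'} => x.2 ⟨j.1, hS'lt j⟩), x.1), x)) (B' ω) := rfl
        rw [hfun]
        exact condEnt_comp_right (fun ω => U ω i) B' _ hg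
      have hle : condEnt μ (fun ω => U ω i) Bc
          ≤ condEnt μ (fun ω => U ω i)
            (fun ω => ((fun j : {j // j ∈ S'} => U ω j.1), Y ω)) := by
        have hfun2 : Bc = fun ω =>
            ((fun ω' => ((fun j : {j // j ∈ S'} => U ω' j.1), Y ω')) ω, B' ω) := rfl
        rw [hfun2]
        exact condEnt_cond_le hμ0 hμ1 (fun ω => U ω i)
          (fun ω => ((fun j : {j // j ∈ S'} => U ω j.1), Y ω)) B'
      rw [← heq]; exact hle
    have hsum : ∑ i' ∈ S, (1 - hEnt μ U Y i')
        = (∑ i' ∈ S', (1 - hEnt μ U Y i')) + (1 - hEnt μ U Y i) :=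
      (Finset.sum_erase_add S _ hiS).symm
    rw [hrel, mstep, hsum]
    linarith

end Main

/-- Leakage bound for polarized frozen sets.  Partition `[1:n]`
according to `h_i = H(U_i | Yⁿ, U^{i−1})` into `L = {i : h_i ≤ δ}`,
`M = {i : δ < h_i ≤ 1−δ}` and `Hset = {i : h_i > 1−δ}`, and let
`F = M ∪ Hset`.  Then `I(U_F; Yⁿ) ≤ |M| + n·δ`. -/
theorem polarized_frozen_leakage_bound {Ω 𝒴 : Type*} [Fintype Ω] [Fintype 𝒴]
    (n : ℕ) (μ : Ω → ℝ) (hμ0 : ∀ ω, 0 ≤ μ ω) (hμ1 : ∑ ω, μ ω = 1)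
    (U : Ω → Fin n → ZMod 2) (Y : Ω → 𝒴)
    (δ : ℝ) (hδ0 : 0 < δ) (hδ1 : δ < 1 / 2)
    (L M Hset F : Finset (Fin n))
    (hL : L = Finset.univ.filter (fun i => hEnt μ U Y i ≤ δ))
    (hM : M = Finset.univ.filter
      (fun i => δ < hEnt μ U Y i ∧ hEnt μ U Y i ≤ 1 - δ))
    (hH : Hset = Finset.univ.filter (fun i => 1 - δ < hEnt μ U Y i))
    (hF : F = M ∪ Hset) :
    mutInfo μ (fun ω => (fun j : {j // j ∈ F} => U ω j.1)) Y
      ≤ (M.card : ℝ) + n * δ := by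
  have hdisj : Disjoint M Hset := by
    rw [Finset.disjoint_left]
    intro i hiM hiH
    rw [hM, Finset.mem_filter] at hiM
    rw [hH, Finset.mem_filter] at hiH
    linarith [hiM.2.2, hiH.2]
  have hmain := main_bound hμ0 hμ1 U Y F
  refine le_trans hmain ?_
  rw [hF, Finset.sum_union hdisj]
  have h1 : ∑ i ∈ M, (1 - hEnt μ U Y i) ≤ (M.card : ℝ) := by
    calc ∑ i ∈ M, (1 - hEnt μ U Y i) ≤ ∑ _i ∈ M, (1 : ℝ) := by
          refine Finset.sum_le_sum fun i hi => ?_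
          rw [hM, Finset.mem_filter] at hi
          linarith [hi.2.1]
      _ = (M.card : ℝ) := by rw [Finset.sum_const, nsmul_eq_mul, mul_one]
  have h2 : ∑ i ∈ Hset, (1 - hEnt μ U Y i) ≤ (n : ℝ) * δ := by
    calc ∑ i ∈ Hset, (1 - hEnt μ U Y i) ≤ ∑ _i ∈ Hset, δ := by
          refine Finset.sum_le_sum fun i hi => ?_
          rw [hH, Finset.mem_filter] at hi
          linarith [hi.2]
      _ = (Hset.card : ℝ) * δ := by rw [Finset.sum_const, nsmul_eq_mul]
      _ ≤ (n : ℝ) * δ := by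
          refine mul_le_mul_of_nonneg_right ?_ hδ0.le
          have := Finset.card_le_univ Hset
          rw [Fintype.card_fin] at this
          exact_mod_cast this
  linarith
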